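/- For every real number a, the improper integral ∫_{0}^{∞} sin(a x)/x dx converges and equals π/2 if a > 0, equals 0 if a = 0, and equals -π/2 if a < 0. -/

import Mathlib

open Filter Real MeasureTheory Set

lemma integral_exp_neg_mul_Ioi {b : ℝ} (hb : 0 < b) :
    ∫ t in Set.Ioi (0:ℝ), Real.exp (-b * t) = 1 / b := by
  have h : ∀ x ∈ Set.Ioi (0:ℝ), HasDerivAt (fun t => -Real.exp (-b * t) / b)
      (Real.exp (-b * x)) x := by
    intro x _
    have : HasDerivAt (fun t : ℝ => -b * t) (-b) x := by
      simpa using (hasDerivAt_id x).const_mul (-b)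
    have := (this.exp).neg.div_const b
    exact this.congr_deriv (by field_simp [hb.ne'])
  have hint : IntegrableOn (fun t => Real.exp (-b * t)) (Set.Ioi (0:ℝ)) :=
    exp_neg_integrableOn_Ioi 0 hb
  have htends : Tendsto (fun t => -Real.exp (-b * t) / b) atTop (nhds 0) := by
    have : Tendsto (fun t : ℝ => -b * t) atTop atBot :=
      tendsto_id.const_mul_atTop_of_neg (neg_neg_iff_pos.mpr hb)
    have := (Real.tendsto_exp_atBot.comp this).neg.div_const b
    simpa using this
  have := MeasureTheory.integral_Ioi_of_hasDerivAt_of_tendsto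
    (Continuous.continuousWithinAt (by continuity)) h hint htends
  rw [this]
  simp
  ring

lemma hasDerivAt_F (t x : ℝ) :
    HasDerivAt (fun x => -(Real.exp (-t*x) * (Real.cos x + t * Real.sin x)) / (1+t^2))
      (Real.exp (-t*x) * Real.sin x) x := by
  have h1 : HasDerivAt (fun x : ℝ => Real.exp (-t*x)) (-t * Real.exp (-t*x)) x := by
    have : HasDerivAt (fun x : ℝ => -t * x) (-t) x := by
      simpa using (hasDerivAt_id x).const_mul (-t)
    simpa [mul_comm] using this.exp
  have h2 : HasDerivAt (fun x : ℝ => Real.cos x + t * Real.sin x)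
      (-Real.sin x + t * Real.cos x) x :=
    (Real.hasDerivAt_cos x).add ((Real.hasDerivAt_sin x).const_mul t)
  have h3 := ((h1.mul h2).neg).div_const (1+t^2)
  have ht : (1:ℝ)+t^2 ≠ 0 := by positivity
  exact h3.congr_deriv (by field_simp; ring)

lemma inner_integral (t R : ℝ) :
    ∫ x in (0:ℝ)..R, Real.exp (-t*x) * Real.sin x =
      (1+t^2)⁻¹ - Real.exp (-t*R) * (Real.cos R + t * Real.sin R) / (1+t^2) := by
  have := intervalIntegral.integral_eq_sub_of_hasDerivAt
    (f := fun x => -(Real.exp (-t*x) * (Real.cos x + t * Real.sin x)) / (1+t^2))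
    (fun x _ => hasDerivAt_F t x)
    (Continuous.intervalIntegrable (by continuity) 0 R)
  rw [this]
  have ht : (1:ℝ)+t^2 ≠ 0 := by positivity
  simp
  field_simp
  ring



noncomputable def errf (R : ℝ) : ℝ :=
  ∫ t in Set.Ioi (0:ℝ), Real.exp (-t*R) * (Real.cos R + t * Real.sin R) / (1+t^2)

lemma err_norm_bound {R t : ℝ} (hR : 0 < R) (ht : 0 < t) :
    ‖Real.exp (-t*R) * (Real.cos R + t * Real.sin R) / (1+t^2)‖ ≤ 2 * Real.exp (-R*t) := by
  have h1 : |Real.cos R + t * Real.sin R| ≤ 1 + t := by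
    calc |Real.cos R + t * Real.sin R| ≤ |Real.cos R| + |t * Real.sin R| := abs_add_le _ _
    _ ≤ 1 + t := by
        have := Real.abs_cos_le_one R
        have h2 : |t * Real.sin R| = t * |Real.sin R| := by
          rw [abs_mul, abs_of_pos ht]
        have := Real.abs_sin_le_one R
        nlinarith [abs_nonneg (Real.sin R)]
  have ht2 : (0:ℝ) < 1 + t^2 := by positivity
  have key : 1 + t ≤ 2 * (1 + t^2) := by nlinarith
  have hexp := Real.exp_pos (-t*R)
  rw [Real.norm_eq_abs, abs_div, abs_mul, abs_of_pos hexp, abs_of_pos ht2, show -R*t = -t*R by ring]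
  rw [div_le_iff₀ ht2]
  calc Real.exp (-t*R) * |Real.cos R + t * Real.sin R| ≤ Real.exp (-t*R) * (1+t) := by
        exact mul_le_mul_of_nonneg_left h1 hexp.le
  _ ≤ 2 * Real.exp (-t*R) * (1+t^2) := by nlinarith [mul_le_mul_of_nonneg_left key hexp.le]

lemma err_integrable {R : ℝ} (hR : 0 < R) :
    IntegrableOn (fun t => Real.exp (-t*R) * (Real.cos R + t * Real.sin R) / (1+t^2))
      (Set.Ioi (0:ℝ)) := by
  apply Integrable.mono' ((exp_neg_integrableOn_Ioi 0 hR).const_mul 2)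
  · apply Continuous.aestronglyMeasurable
    apply Continuous.div (by continuity) (by continuity)
    intro t; positivity
  · filter_upwards [ae_restrict_mem measurableSet_Ioi] with t ht
    exact err_norm_bound hR ht

lemma identity {R : ℝ} (hR : 0 < R) :
    ∫ x in (0:ℝ)..R, Real.sin x / x = π/2 - errf R := by
  set μ := volume.restrict (Set.Ioc (0:ℝ) R)
  set ν := volume.restrict (Set.Ioi (0:ℝ))
  set f : ℝ → ℝ → ℝ := fun x t => Real.exp (-t*x) * Real.sin x with hf_def
  have hcont : Continuous (Function.uncurry f) := by
    apply Continuous.mul ?_ (by fun_prop)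
    exact Real.continuous_exp.comp (by fun_prop)
  have hmeas : AEStronglyMeasurable (Function.uncurry f) (μ.prod ν) :=
    hcont.aestronglyMeasurable
  have h1 : ∀ᵐ x ∂μ, Integrable (fun t => f x t) ν := by
    filter_upwards [ae_restrict_mem measurableSet_Ioc] with x hx
    have h := (exp_neg_integrableOn_Ioi 0 hx.1).mul_const (Real.sin x)
    apply h.congr
    filter_upwards with t
    simp [hf_def, mul_comm]
  have hnorm : ∀ x ∈ Set.Ioc (0:ℝ) R,
      (∫ t, ‖f x t‖ ∂ν) = (1/x) * |Real.sin x| := by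
    intro x hx
    have : (fun t => ‖f x t‖) = fun t => Real.exp (-x*t) * |Real.sin x| := by
      funext t
      simp [hf_def, abs_mul, abs_of_pos (Real.exp_pos _), mul_comm]
    rw [this, integral_mul_const, integral_exp_neg_mul_Ioi hx.1]
  have h2 : Integrable (fun x => ∫ t, ‖f x t‖ ∂ν) μ := by
    apply Integrable.mono' (g := fun _ : ℝ => (1:ℝ))
      (integrableOn_const measure_Ioc_lt_top.ne)
    · exact hmeas.norm.integral_prod_right'
    · filter_upwards [ae_restrict_mem measurableSet_Ioc] with x hx
      rw [hnorm x hx]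
      have hsx : |Real.sin x| ≤ x := le_trans Real.abs_sin_le_abs (le_of_eq (abs_of_pos hx.1))
      rw [Real.norm_eq_abs, abs_of_nonneg (mul_nonneg (div_nonneg zero_le_one hx.1.le) (abs_nonneg _))]
      rw [div_mul_eq_mul_div, one_mul, div_le_one hx.1]
      exact hsx
  have hf : Integrable (Function.uncurry f) (μ.prod ν) :=
    (MeasureTheory.integrable_prod_iff hmeas).mpr ⟨h1, h2⟩
  have hswap := MeasureTheory.integral_integral_swap hf
  have hL : (∫ x, ∫ t, f x t ∂ν ∂μ) = ∫ x in (0:ℝ)..R, Real.sin x / x := by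
    rw [intervalIntegral.integral_of_le hR.le]
    apply MeasureTheory.integral_congr_ae
    filter_upwards [ae_restrict_mem measurableSet_Ioc] with x hx
    have : (fun t => f x t) = fun t => Real.exp (-x*t) * Real.sin x := by
      funext t; simp [hf_def, mul_comm]
    rw [this, integral_mul_const, integral_exp_neg_mul_Ioi hx.1]
    field_simp
  have hRt : (∫ t, ∫ x, f x t ∂μ ∂ν) = π/2 - errf R := by
    have heq : ∀ t : ℝ, (∫ x, f x t ∂μ) =
        (1+t^2)⁻¹ - Real.exp (-t*R) * (Real.cos R + t * Real.sin R) / (1+t^2) := by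
      intro t
      rw [show (∫ x, f x t ∂μ) = ∫ x in (0:ℝ)..R, Real.exp (-t*x) * Real.sin x by
        rw [intervalIntegral.integral_of_le hR.le]]
      exact inner_integral t R
    rw [MeasureTheory.integral_congr_ae (Filter.Eventually.of_forall heq)]
    rw [MeasureTheory.integral_sub integrable_inv_one_add_sq.integrableOn (err_integrable hR)]
    rw [integral_Ioi_inv_one_add_sq]
    simp [errf]
  rw [← hL, hswap, hRt]

lemma dirichlet :
    Tendsto (fun R : ℝ => ∫ x in (0:ℝ)..R, Real.sin x / x) atTop (nhds (π/2)) := by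
  have herr : Tendsto errf atTop (nhds 0) := by
    apply squeeze_zero_norm' (a := fun R : ℝ => 2 / R) ?_ 
      (Tendsto.div_atTop tendsto_const_nhds tendsto_id)
    filter_upwards [eventually_gt_atTop (0:ℝ)] with R hR
    have hb := MeasureTheory.norm_integral_le_of_norm_le
      (f := fun t => Real.exp (-t*R) * (Real.cos R + t * Real.sin R) / (1+t^2))
      ((exp_neg_integrableOn_Ioi 0 hR).const_mul 2)
      (by filter_upwards [ae_restrict_mem measurableSet_Ioi] with t ht
          exact err_norm_bound hR ht)
    calc ‖errf R‖ ≤ ∫ t in Set.Ioi (0:ℝ), 2 * Real.exp (-R*t) := hb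
    _ = 2 / R := by
        rw [MeasureTheory.integral_const_mul, integral_exp_neg_mul_Ioi hR]
        ring
  have h := (tendsto_const_nhds (x := π/2) (f := atTop (α := ℝ))).sub herr
  rw [sub_zero] at h
  apply h.congr'
  filter_upwards [eventually_gt_atTop (0:ℝ)] with R hR
  exact (identity hR).symm

lemma scaling {c : ℝ} (hc : c ≠ 0) (R : ℝ) :
    ∫ x in (0:ℝ)..R, Real.sin (c*x) / x = ∫ u in (0:ℝ)..(c*R), Real.sin u / u := by
  have h0 : ∀ᵐ x : ℝ, x ∈ Set.uIoc (0:ℝ) R → Real.sin (c*x) / x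
      = c * ((fun u => Real.sin u / u) (c*x)) := by
    have : ∀ᵐ x : ℝ, x ≠ 0 := by
      rw [MeasureTheory.ae_iff]; simp
    filter_upwards [this] with x hx _
    field_simp
  rw [intervalIntegral.integral_congr_ae h0, intervalIntegral.integral_const_mul,
    intervalIntegral.integral_comp_mul_left (fun u => Real.sin u / u) hc]
  rw [smul_eq_mul, ← mul_assoc, mul_inv_cancel₀ hc, one_mul, mul_zero]

theorem stmt1 (a : ℝ) :
    Tendsto (fun R : ℝ => ∫ x in (0:ℝ)..R, Real.sin (a * x) / x) atTop
      (nhds (if 0 < a then π / 2 else if a = 0 then 0 else -(π / 2))) := by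
  rcases lt_trichotomy a 0 with ha | ha | ha
  · rw [if_neg (not_lt.mpr ha.le), if_neg ha.ne]
    have hpos : (0:ℝ) < -a := neg_pos.mpr ha
    have h := (dirichlet.comp (tendsto_id.const_mul_atTop hpos)).neg
    apply h.congr
    intro R
    have := scaling (c := -a) hpos.ne' R
    simp only [Function.comp, id_eq] at *
    rw [← this]
    rw [← intervalIntegral.integral_neg]
    congr 1
    funext x
    rw [neg_mul, Real.sin_neg, neg_div, neg_neg]
  · simp [ha]
  · rw [if_pos ha]
    have h := dirichlet.comp (tendsto_id.const_mul_atTop ha)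
    apply h.congr
    intro R
    simp only [Function.comp, id_eq]
    exact (scaling ha.ne' R).symm
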